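/- Null-terminated resource-carrying list segments compose: for all terms t₁, t₂, every consumable resource r₀, every environment η and every heap–resource pair (H, r), if η, (H, r) ⊨ lseg(r₀, t₁, t₂) * lseg(r₀, t₂, null), then η, (H, r) ⊨ lseg(r₀, t₁, null). -/
import Mathlib


/-- An ordered commutative monoid of consumable resources, whose unit is the
least element and whose operation is monotone. -/
structure ResMon : Type 1 where
  carrier : Type
  le : carrier → carrier → Prop
  op : carrier → carrier → carrier
  e : carrier
  le_refl : ∀ r, le r r
  le_trans : ∀ {a b c}, le a b → le b c → le a c
  op_comm : ∀ a b, op a b = op b a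
  op_assoc : ∀ a b c, op (op a b) c = op a (op b c)
  op_e : ∀ a, op a e = a
  e_le : ∀ a, le e a
  op_mono : ∀ {a b c d}, le a b → le c d → le (op a c) (op b d)

/-- Values: possibly-null addresses and integers. -/
inductive Val (A : Type) where
  | addr : Option A → Val A
  | int : ℤ → Val A

/-- The null value. -/
def Val.null {A : Type} : Val A := .addr none

/-- Heaps: finite partial maps from (address, field name) pairs to values. -/
abbrev Heap (A F : Type) : Type := Finmap (fun _ : A × F => Val A)

/-- Terms of the assertion logic: logical variables and the constant null. -/
inductive Term where
  | var (x : ℕ)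
  | null

/-- Interpretation of terms in an environment. -/
def Term.eval {A : Type} (η : ℕ → Val A) : Term → Val A
  | .var x => η x
  | .null => .addr none

/-- Formulae of the deep assertion logic. -/
inductive Formula (F R : Type) where
  | tt
  | eq (t₁ t₂ : Term)
  | ne (t₁ t₂ : Term)
  | and (φ₁ φ₂ : Formula F R)
  | or (φ₁ φ₂ : Formula F R)
  | imp (φ₁ φ₂ : Formula F R)
  | emp
  | star (φ₁ φ₂ : Formula F R)
  | wand (φ₁ φ₂ : Formula F R)
  | all (x : ℕ) (φ : Formula F R)
  | ex (x : ℕ) (φ : Formula F R)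
  | points (t₁ : Term) (f : F) (t₂ : Term)
  | res (r : R)

/-- The semantics of the deep assertion logic (Figure 6):
`Sat M φ η H r` is `η, (H, r) ⊨ φ`. -/
def Sat (M : ResMon) {A F : Type} [DecidableEq A] [DecidableEq F] :
    Formula F M.carrier → (ℕ → Val A) → Heap A F → M.carrier → Prop
  | .tt => fun _ _ _ => True
  | .eq t₁ t₂ => fun η _ _ => t₁.eval η = t₂.eval η
  | .ne t₁ t₂ => fun η _ _ => t₁.eval η ≠ t₂.eval η
  | .and φ₁ φ₂ => fun η H r => Sat M φ₁ η H r ∧ Sat M φ₂ η H r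
  | .or φ₁ φ₂ => fun η H r => Sat M φ₁ η H r ∨ Sat M φ₂ η H r
  | .imp φ₁ φ₂ => fun η H r => ∀ r', M.le r r' → Sat M φ₁ η H r' → Sat M φ₂ η H r'
  | .emp => fun _ H _ => H = ∅
  | .star φ₁ φ₂ => fun η H r =>
      ∃ (H₁ H₂ : Heap A F) (r₁ r₂ : M.carrier),
        H₁.Disjoint H₂ ∧ H₁ ∪ H₂ = H ∧ M.le (M.op r₁ r₂) r ∧
        Sat M φ₁ η H₁ r₁ ∧ Sat M φ₂ η H₂ r₂
  | .wand φ₁ φ₂ => fun η H r =>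
      ∀ (H' H'' : Heap A F) (r' r'' : M.carrier),
        H.Disjoint H' → H ∪ H' = H'' → M.le (M.op r r') r'' →
        Sat M φ₁ η H' r' → Sat M φ₂ η H'' r''
  | .all x φ => fun η H r => ∀ v : Val A, Sat M φ (Function.update η x v) H r
  | .ex x φ => fun η H r => ∃ v : Val A, Sat M φ (Function.update η x v) H r
  | .points t₁ f t₂ => fun η H _ =>
      ∃ a : A, t₁.eval η = .addr (some a) ∧ H = Finmap.singleton (a, f) (t₂.eval η)
  | .res r₀ => fun _ H r => H = ∅ ∧ M.le r₀ r

/-- The resource-carrying list-segment predicate: the least predicate satisfying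
`lseg(r₀, x, y) ⟺ (x = y ∧ emp) ∨ (∃d,z. x.data ↦ d * x.next ↦ z * R_{r₀} * lseg(r₀, z, y))`,
interpreted in the heap-and-resource semantics. `dataF` and `nextF` are the
`data` and `next` field names. -/
inductive Lseg (M : ResMon) {A F : Type} [DecidableEq A] [DecidableEq F]
    (dataF nextF : F) (r₀ : M.carrier) : Val A → Val A → Heap A F → M.carrier → Prop where
  | nil (x : Val A) (r : M.carrier) : Lseg M dataF nextF r₀ x x ∅ r
  | cons (a : A) (d z y : Val A) (Ht : Heap A F) (rt r : M.carrier)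
      (hd : (a, dataF) ∉ Ht) (hn : (a, nextF) ∉ Ht)
      (hr : M.le (M.op r₀ rt) r)
      (htail : Lseg M dataF nextF r₀ z y Ht rt) :
      Lseg M dataF nextF r₀ (.addr (some a)) y
        ((Ht.insert (a, nextF) z).insert (a, dataF) d) r

/-- `n`-fold combination `r₀ · r₀ · ⋯ · r₀` (`n` factors, `e` when `n = 0`). -/
def ResMon.pow (M : ResMon) (r₀ : M.carrier) : ℕ → M.carrier
  | 0 => M.e
  | n + 1 => M.op r₀ (M.pow r₀ n)

lemma Lseg.mono (M : ResMon) {A F : Type} [DecidableEq A] [DecidableEq F]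
    {dataF nextF : F} {r₀ : M.carrier} {x y : Val A} {H : Heap A F} {r r' : M.carrier}
    (h : Lseg M dataF nextF r₀ x y H r) (hle : M.le r r') :
    Lseg M dataF nextF r₀ x y H r' := by
  induction h generalizing r' with
  | nil x r => exact .nil x r'
  | cons a d z y Ht rt r hd hn hr htail ih =>
      exact .cons a d z y Ht rt r' hd hn (M.le_trans hr hle) htail

lemma Lseg.append (M : ResMon) {A F : Type} [DecidableEq A] [DecidableEq F]
    {dataF nextF : F} (hfields : dataF ≠ nextF) {r₀ : M.carrier}
    {x y : Val A} {H₁ H₂ : Heap A F} {r₁ r₂ r : M.carrier}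
    (h₁ : Lseg M dataF nextF r₀ x y H₁ r₁)
    (h₂ : Lseg M dataF nextF r₀ y (Val.null : Val A) H₂ r₂)
    (hdisj : H₁.Disjoint H₂) (hle : M.le (M.op r₁ r₂) r) :
    Lseg M dataF nextF r₀ x (Val.null : Val A) (H₁ ∪ H₂) r := by
  induction h₁ generalizing r with
  | nil x r₁ =>
      rw [Finmap.empty_union]
      refine Lseg.mono M h₂ (M.le_trans ?_ hle)
      have : M.le (M.op M.e r₂) (M.op r₁ r₂) := M.op_mono (M.e_le r₁) (M.le_refl r₂)
      rwa [M.op_comm M.e r₂, M.op_e] at this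
  | cons a d z y Ht rt r₁ hd hn hr htail ih =>
      have hdmem : (a, dataF) ∉ H₂ := by
        intro hmem
        exact hdisj (a, dataF) (by simp [Finmap.mem_insert]) hmem
      have hnmem : (a, nextF) ∉ H₂ := by
        intro hmem
        exact hdisj (a, nextF) (by simp [Finmap.mem_insert]) hmem
      have hdisj' : Ht.Disjoint H₂ := by
        intro k hk
        exact hdisj k (by simp [Finmap.mem_insert, hk])
      rw [← Finmap.insert_union, ← Finmap.insert_union]
      refine Lseg.cons a d z _ (Ht ∪ H₂) (M.op rt r₂) r ?_ ?_ ?_ ?_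
      · simpa [Finmap.mem_union] using And.intro hd hdmem
      · simpa [Finmap.mem_union] using And.intro hn hnmem
      · refine M.le_trans ?_ hle
        rw [← M.op_assoc]
        exact M.op_mono hr (M.le_refl r₂)
      · exact ih h₂ hdisj' (M.le_refl _)

/-- **Theorem.** Null-terminated resource-carrying list segments compose: if
`η, (H, r) ⊨ lseg(r₀, t₁, t₂) * lseg(r₀, t₂, null)` then
`η, (H, r) ⊨ lseg(r₀, t₁, null)`. -/
theorem lseg_append_null (M : ResMon) {A F : Type} [DecidableEq A] [DecidableEq F]
    (dataF nextF : F) (hfields : dataF ≠ nextF) (r₀ : M.carrier)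
    (t₁ t₂ : Term) (η : ℕ → Val A) (H : Heap A F) (r : M.carrier)
    (hsat : ∃ (H₁ H₂ : Heap A F) (r₁ r₂ : M.carrier),
      H₁.Disjoint H₂ ∧ H₁ ∪ H₂ = H ∧ M.le (M.op r₁ r₂) r ∧
      Lseg M dataF nextF r₀ (t₁.eval η) (t₂.eval η) H₁ r₁ ∧
      Lseg M dataF nextF r₀ (t₂.eval η) (Val.null : Val A) H₂ r₂) :
    Lseg M dataF nextF r₀ (t₁.eval η) (Val.null : Val A) H r := by
  obtain ⟨H₁, H₂, r₁, r₂, hdisj, hunion, hle, h₁, h₂⟩ := hsat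
  subst hunion
  exact Lseg.append M hfields h₁ h₂ hdisj hle
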